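/- Let X and Z be jointly distributed random variables on finite sets, let {h_s : 𝒳 → {0,1}^t}_{s∈𝒮} be any family of functions indexed by 𝒮, and let S be uniformly distributed on 𝒮 and independent of (X, Z). Then H̃∞(X | (Z, S, h_S(X))) ≥ H̃∞(X | Z) − t. (In particular, H̃∞(X | (Z, S)) = H̃∞(X | Z) since S is independent of (X, Z), and revealing the t-bit hash value h_S(X) decreases the average conditional min-entropy by at most t.) -/

import Mathlib

open scoped BigOperators Classical

/-- Average conditional min-entropy `H̃∞(A|B) = -log₂ Σ_b max_a Pr[A = a, B = b]`. -/
noncomputable def Havg {A B : Type*} [Fintype A] [Fintype B] [Nonempty A] (p : A × B → ℝ) : ℝ :=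
  - Real.logb 2 (∑ b : B, Finset.univ.sup' Finset.univ_nonempty (fun a : A => p (a, b)))

lemma sup'_div' {ι : Type*} (s : Finset ι) (hs : s.Nonempty) (f : ι → ℝ) (c : ℝ) (hc : 0 ≤ c) :
    s.sup' hs (fun x => f x / c) = s.sup' hs f / c :=
  (Finset.comp_sup'_eq_sup'_comp hs (g := fun x : ℝ => x / c)
    (fun x y => (max_div_div_right hc x y).symm)).symm

/-- revealing a uniformly seeded `t`-bit hash value of `X` decreases the
average conditional min-entropy by at most `t`:
`H̃∞(X | (Z, S, h_S(X))) ≥ H̃∞(X | Z) − t`; moreover `H̃∞(X | (Z, S)) = H̃∞(X | Z)` since the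
seed `S` is independent of `(X, Z)`. -/
theorem avg_min_entropy_hash_leakage
    {X Z S : Type*} [Fintype X] [Fintype Z] [Fintype S] [Nonempty X] [Nonempty S]
    (t : ℕ) (h : S → X → (Fin t → Bool))
    (p : X × Z → ℝ) (hp : ∀ x, 0 ≤ p x) (hsum : ∑ x : X × Z, p x = 1) :
    Havg (fun w : X × (Z × S × (Fin t → Bool)) =>
        (if h w.2.2.1 w.1 = w.2.2.2 then p (w.1, w.2.1) else 0) / (Fintype.card S : ℝ))
      ≥ Havg p - t
    ∧ Havg (fun w : X × (Z × S) => p (w.1, w.2.1) / (Fintype.card S : ℝ)) = Havg p := by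
  classical
  have hScard : (0:ℝ) < (Fintype.card S : ℝ) := by
    exact_mod_cast Fintype.card_pos
  set M : ℝ := ∑ z : Z, Finset.univ.sup' Finset.univ_nonempty (fun x : X => p (x, z)) with hMdef
  have hsupnn : ∀ z : Z, 0 ≤ Finset.univ.sup' Finset.univ_nonempty (fun x : X => p (x, z)) := by
    intro z
    obtain ⟨x⟩ := (inferInstance : Nonempty X)
    exact le_trans (hp (x, z)) (Finset.le_sup' (fun x : X => p (x, z)) (Finset.mem_univ x))
  have hMpos : 0 < M := by
    obtain ⟨w, -, hw⟩ : ∃ w ∈ (Finset.univ : Finset (X × Z)), 0 < p w := by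
      by_contra hcon
      push_neg at hcon
      have : ∑ x : X × Z, p x = 0 :=
        Finset.sum_eq_zero (fun w hw => le_antisymm (hcon w hw) (hp w))
      rw [this] at hsum; norm_num at hsum
    obtain ⟨x₀, z₀⟩ := w
    have h1 : p (x₀, z₀) ≤ Finset.univ.sup' Finset.univ_nonempty (fun x : X => p (x, z₀)) :=
      Finset.le_sup' (fun x : X => p (x, z₀)) (Finset.mem_univ x₀)
    have h2 : Finset.univ.sup' Finset.univ_nonempty (fun x : X => p (x, z₀)) ≤ M :=
      Finset.single_le_sum (fun z _ => hsupnn z) (Finset.mem_univ z₀)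
    linarith
  -- Second part
  have hsecond :
      Havg (fun w : X × (Z × S) => p (w.1, w.2.1) / (Fintype.card S : ℝ)) = Havg p := by
    unfold Havg
    congr 1
    congr 1
    rw [Fintype.sum_prod_type]
    refine Finset.sum_congr rfl (fun z _ => ?_)
    rw [Finset.sum_congr rfl (fun s _ => sup'_div' (Finset.univ) Finset.univ_nonempty
      (fun x : X => p (x, z)) _ hScard.le), Finset.sum_const]
    simp only [Finset.card_univ, nsmul_eq_mul]
    field_simp
  refine ⟨?_, hsecond⟩
  -- First part
  have hqnn : ∀ (b : Z × S × (Fin t → Bool)) (x : X),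
      0 ≤ (if h b.2.1 x = b.2.2 then p (x, b.1) else 0) / (Fintype.card S : ℝ) := by
    intro b x
    apply div_nonneg _ hScard.le
    split
    · exact hp _
    · exact le_rfl
  set T : ℝ := ∑ b : Z × S × (Fin t → Bool),
    Finset.univ.sup' Finset.univ_nonempty (fun x : X =>
      (if h b.2.1 x = b.2.2 then p (x, b.1) else 0) / (Fintype.card S : ℝ)) with hTdef
  have hTsupnn : ∀ b : Z × S × (Fin t → Bool),
      0 ≤ Finset.univ.sup' Finset.univ_nonempty (fun x : X =>
        (if h b.2.1 x = b.2.2 then p (x, b.1) else 0) / (Fintype.card S : ℝ)) := by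
    intro b
    obtain ⟨x⟩ := (inferInstance : Nonempty X)
    exact le_trans (hqnn b x) (Finset.le_sup' (fun x : X =>
      (if h b.2.1 x = b.2.2 then p (x, b.1) else 0) / (Fintype.card S : ℝ))
      (Finset.mem_univ x))
  -- lower bound
  have hlow : M ≤ T := by
    rw [hTdef, hMdef, Fintype.sum_prod_type]
    apply Finset.sum_le_sum
    intro z _
    rw [show (∑ sv : S × (Fin t → Bool),
        Finset.univ.sup' Finset.univ_nonempty (fun x : X =>
          (if h sv.1 x = sv.2 then p (x, z) else 0) / (Fintype.card S : ℝ)))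
      = ∑ s : S, ∑ v : (Fin t → Bool),
        Finset.univ.sup' Finset.univ_nonempty (fun x : X =>
          (if h s x = v then p (x, z) else 0) / (Fintype.card S : ℝ))
      from Fintype.sum_prod_type _]
    have step1 : Finset.univ.sup' Finset.univ_nonempty (fun x : X => p (x, z))
        = ∑ _s : S, Finset.univ.sup' Finset.univ_nonempty (fun x : X => p (x, z))
            / (Fintype.card S : ℝ) := by
      rw [Finset.sum_const]
      simp only [Finset.card_univ, nsmul_eq_mul]
      field_simp
    rw [step1]
    apply Finset.sum_le_sum
    intro s _
    obtain ⟨x₀, -, hx₀⟩ := Finset.exists_mem_eq_sup' (Finset.univ_nonempty (α := X))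
      (fun x : X => p (x, z))
    rw [hx₀]
    calc p (x₀, z) / (Fintype.card S : ℝ)
        = (if h s x₀ = h s x₀ then p (x₀, z) else 0) / (Fintype.card S : ℝ) := by simp
      _ ≤ Finset.univ.sup' Finset.univ_nonempty (fun x : X =>
            (if h s x = h s x₀ then p (x, z) else 0) / (Fintype.card S : ℝ)) :=
          Finset.le_sup' (fun x : X =>
            (if h s x = h s x₀ then p (x, z) else 0) / (Fintype.card S : ℝ))
            (Finset.mem_univ x₀)
      _ ≤ _ :=
          Finset.single_le_sum (fun v _ => hTsupnn (z, s, v)) (Finset.mem_univ (h s x₀))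
  have hTpos : 0 < T := lt_of_lt_of_le hMpos hlow
  -- upper bound
  have hupp : T ≤ (2:ℝ)^t * M := by
    rw [hTdef, hMdef, Fintype.sum_prod_type, Finset.mul_sum]
    apply Finset.sum_le_sum
    intro z _
    have hb : ∀ sv : S × (Fin t → Bool),
        Finset.univ.sup' Finset.univ_nonempty (fun x : X =>
          (if h sv.1 x = sv.2 then p (x, z) else 0) / (Fintype.card S : ℝ))
        ≤ Finset.univ.sup' Finset.univ_nonempty (fun x : X => p (x, z))
            / (Fintype.card S : ℝ) := by
      intro sv
      apply Finset.sup'_le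
      intro x _
      apply div_le_div_of_nonneg_right ?_ hScard.le
      split
      · exact Finset.le_sup' (fun x : X => p (x, z)) (Finset.mem_univ x)
      · exact hsupnn z
    calc (∑ sv : S × (Fin t → Bool),
          Finset.univ.sup' Finset.univ_nonempty (fun x : X =>
            (if h sv.1 x = sv.2 then p (x, z) else 0) / (Fintype.card S : ℝ)))
        ≤ ∑ _sv : S × (Fin t → Bool),
            Finset.univ.sup' Finset.univ_nonempty (fun x : X => p (x, z))
              / (Fintype.card S : ℝ) :=
          Finset.sum_le_sum (fun sv _ => hb sv)
      _ = (2:ℝ)^t * Finset.univ.sup' Finset.univ_nonempty (fun x : X => p (x, z)) := by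
          rw [Finset.sum_const]
          simp only [Finset.card_univ, nsmul_eq_mul, Fintype.card_prod, Fintype.card_fun,
            Fintype.card_bool, Fintype.card_fin]
          push_cast
          field_simp
  -- conclude
  show Havg _ ≥ Havg p - t
  unfold Havg
  rw [← hMdef]
  have hTgoal : (∑ b : Z × S × (Fin t → Bool),
      Finset.univ.sup' Finset.univ_nonempty (fun x : X =>
        (if h b.2.1 x = b.2.2 then p (x, b.1) else 0) / (Fintype.card S : ℝ))) = T := hTdef.symm
  rw [hTgoal]
  have hlog : Real.logb 2 T ≤ Real.logb 2 ((2:ℝ)^t * M) :=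
    Real.logb_le_logb_of_le (by norm_num) hTpos hupp
  have hexp : Real.logb 2 ((2:ℝ)^t * M) = t + Real.logb 2 M := by
    rw [Real.logb_mul (by positivity) (ne_of_gt hMpos), Real.logb_pow,
      Real.logb_self_eq_one (by norm_num)]
    ring
  linarith
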